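/- Let F be the free group on generators x_1, …, x_m and let w ∈ [F,F] be an element of its commutator subgroup. Let G be a group, A an abelian normal subgroup of G, and B = [A,G] the subgroup generated by all commutators [a,g] with a ∈ A, g ∈ G. Then for all elements a_1, …, a_m ∈ G and c_1, …, c_m ∈ A, the elements w(a_1 c_1, …, a_m c_m) and w(a_1, …, a_m) are congruent modulo B, i.e. w(a_1 c_1, …, a_m c_m) · w(a_1, …, a_m)⁻¹ ∈ B. Here w(g_1, …, g_m) denotes the image of w under the homomorphism F → G sending x_i to g_i. -/

import Mathlib

theorem commutator_word_congruent_mod_commutator_of_abelian_normal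
    (m : ℕ) (w : FreeGroup (Fin m)) (hw : w ∈ commutator (FreeGroup (Fin m)))
    (G : Type*) [Group G] (A : Subgroup G) [A.Normal]
    (hA : ∀ x ∈ A, ∀ y ∈ A, x * y = y * x)
    (a : Fin m → G) (c : Fin m → G) (hc : ∀ i, c i ∈ A) :
    FreeGroup.lift (fun i => a i * c i) w * (FreeGroup.lift a w)⁻¹
      ∈ ⁅A, (⊤ : Subgroup G)⁆ := by
  set B : Subgroup G := ⁅A, (⊤ : Subgroup G)⁆ with hB
  haveI hBn : B.Normal := Subgroup.commutator_normal A ⊤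
  set Q := G ⧸ B
  set π : G →* Q := QuotientGroup.mk' B with hπ
  -- images of c i are central in Q
  have hcent : ∀ i, π (c i) ∈ Subgroup.center Q := by
    intro i
    rw [Subgroup.mem_center_iff]
    intro q
    obtain ⟨g, rfl⟩ := QuotientGroup.mk'_surjective B q
    open scoped commutatorElement in
    have hmem : (g * c i)⁻¹ * (c i * g) ∈ B := by
      have h1 : ⁅(c i)⁻¹, g⁻¹⁆ ∈ B :=
        Subgroup.commutator_mem_commutator (A.inv_mem (hc i)) (Subgroup.mem_top g⁻¹)
      have : (g * c i)⁻¹ * (c i * g) = ⁅(c i)⁻¹, g⁻¹⁆ := by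
        simp [commutatorElement_def, mul_assoc]
      rwa [this]
    have : π (g * c i) = π (c i * g) := QuotientGroup.eq.mpr hmem
    rw [map_mul, map_mul] at this
    exact this
  set z : Fin m → Subgroup.center Q := fun i => ⟨π (c i), hcent i⟩ with hz
  set ζ : FreeGroup (Fin m) →* Q :=
    (Subgroup.center Q).subtype.comp (FreeGroup.lift z) with hζ
  have hζcent : ∀ u, ζ u ∈ Subgroup.center Q := fun u => (FreeGroup.lift z u).2
  -- the twisted homomorphism
  set h : FreeGroup (Fin m) →* Q :=
    { toFun := fun u => FreeGroup.lift (fun i => π (a i)) u * ζ u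
      map_one' := by simp
      map_mul' := by
        intro u v
        have hc1 := Subgroup.mem_center_iff.mp (hζcent u)
        simp only [map_mul]
        set x := FreeGroup.lift (fun i => π (a i)) u
        set y := FreeGroup.lift (fun i => π (a i)) v
        calc x * y * (ζ u * ζ v) = x * (y * ζ u) * ζ v := by group
          _ = x * (ζ u * y) * ζ v := by rw [hc1 y]
          _ = x * ζ u * (y * ζ v) := by group } with hh
  have key : FreeGroup.lift (fun i => π (a i) * π (c i)) = h := by
    apply FreeGroup.ext_hom
    intro i
    simp [hh, hζ, hz]
  have hζw : ζ w = 1 := by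
    letI : CommGroup (Subgroup.center Q) := { (inferInstance : Group (Subgroup.center Q)) with
      mul_comm := fun x y => Subtype.ext (Subgroup.mem_center_iff.mp y.2 x) }
    have : FreeGroup.lift z w = 1 :=
      (FreeGroup.lift z).mem_ker.mp (Abelianization.commutator_subset_ker (FreeGroup.lift z) hw)
    simp [hζ, this]
  have heq0 : FreeGroup.lift (fun i => π (a i) * π (c i)) w
      = FreeGroup.lift (fun i => π (a i)) w := by
    rw [key]
    show FreeGroup.lift (fun i => π (a i)) w * ζ w = _
    rw [hζw, mul_one]
  have e1 : π.comp (FreeGroup.lift (fun i => a i * c i)) =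
      FreeGroup.lift (fun i => π (a i) * π (c i)) := by
    apply FreeGroup.ext_hom; intro i; simp
  have e2 : π.comp (FreeGroup.lift a) = FreeGroup.lift (fun i => π (a i)) := by
    apply FreeGroup.ext_hom; intro i; simp
  have heq : π (FreeGroup.lift (fun i => a i * c i) w) = π (FreeGroup.lift a w) := by
    have h1 := DFunLike.congr_fun e1 w
    have h2 := DFunLike.congr_fun e2 w
    simp only [MonoidHom.comp_apply] at h1 h2
    rw [h1, heq0, ← h2]
  have hmem : (FreeGroup.lift a w)⁻¹ * FreeGroup.lift (fun i => a i * c i) w ∈ B :=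
    QuotientGroup.eq.mp heq.symm
  exact hBn.mem_comm hmem
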